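/- Let X ⊆ ℝⁿ be closed convex, f convex differentiable, φ convex, η > 0, σ ≥ 0, M > 0 with η ≥ 2M ≥ 0. Let x⁺⁺ := argmin_{u∈X} ⟨∇f(x), u⟩ + φ(u) + (σ/2)‖u - x̄‖² + (η/2)‖u - x‖². If f(x⁺⁺) - f(x) - ⟨∇f(x), x⁺⁺ - x⟩ ≤ (M/2)‖x⁺⁺ - x‖², then for all u ∈ X: [f(x⁺⁺) + φ(x⁺⁺) + (σ/2)‖x⁺⁺ - x̄‖²] - [f(u) + φ(u) + (σ/2)‖u - x̄‖²] ≤ (η/2)‖u - x‖² - ((σ+η)/2)‖u - x⁺⁺‖² - ((η-M)/2)‖x⁺⁺ - x‖². -/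

import Mathlib

open scoped RealInnerProductSpace
open Set

section aux
variable {E : Type*} [NormedAddCommGroup E] [InnerProductSpace ℝ E]

lemma combo_norm_sq (a b : E) (t : ℝ) :
    ‖(1-t) • a + t • b‖ ^ 2
      = (1-t) * ‖a‖ ^ 2 + t * ‖b‖ ^ 2 - t * (1-t) * ‖a - b‖ ^ 2 := by
  have h : ∀ v : E, ‖v‖ ^ 2 = ⟪v, v⟫ := fun v => (real_inner_self_eq_norm_sq v).symm
  rw [h, h, h, h]
  simp only [inner_add_add_self, inner_sub_sub_self, real_inner_smul_left,
    real_inner_smul_right]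
  ring

lemma combo_norm_sq' (a b p : E) (t : ℝ) :
    ‖((1-t) • a + t • b) - p‖ ^ 2
      = (1-t) * ‖a - p‖ ^ 2 + t * ‖b - p‖ ^ 2 - t * (1-t) * ‖a - b‖ ^ 2 := by
  have h : ((1-t) • a + t • b) - p = (1-t) • (a - p) + t • (b - p) := by
    module
  rw [h, combo_norm_sq, sub_sub_sub_cancel_right]

lemma grad_ineq (f : E → ℝ) (hf : ConvexOn ℝ Set.univ f)
    (hdiff : Differentiable ℝ f) (x u : E) [CompleteSpace E] :
    f x + ⟪gradient f x, u - x⟫ ≤ f u := by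
  have hg : HasGradientAt f (gradient f x) x := (hdiff x).hasGradientAt
  have hfd := hg.hasFDerivAt
  set L : ℝ →ᵃ[ℝ] E := AffineMap.lineMap x u with hL
  have h1d : HasDerivAt (fun t : ℝ => (1 - t) • x) (-x) 0 := by
    simpa [neg_smul] using ((hasDerivAt_id (0:ℝ)).const_sub 1).smul_const x
  have h2d : HasDerivAt (fun t : ℝ => t • u) u 0 := by
    simpa using (hasDerivAt_id (0:ℝ)).smul_const u
  have hline : HasDerivAt (fun t : ℝ => L t) (u - x) 0 := by
    simp only [hL, AffineMap.lineMap_apply_module]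
    rw [sub_eq_neg_add]
    exact h1d.add h2d
  have hL0 : L 0 = x := AffineMap.lineMap_apply_zero x u
  have hfd' : HasFDerivAt f (InnerProductSpace.toDual ℝ E (gradient f x)) (L 0) :=
    hL0.symm ▸ hfd
  have hcomp : HasDerivAt (f ∘ L) ⟪gradient f x, u - x⟫ 0 := by
    have := hfd'.comp_hasDerivAt 0 hline
    simpa [InnerProductSpace.toDual_apply_apply] using this
  have hconv : ConvexOn ℝ Set.univ (f ∘ L) := by
    have := hf.comp_affineMap L
    simpa using this
  have hs := hconv.le_slope_of_hasDerivAt (mem_univ (0:ℝ)) (mem_univ (1:ℝ)) one_pos hcomp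
  have h1 : (f ∘ L) 1 = f u := by simp [hL]
  have h0 : (f ∘ L) 0 = f x := by simp [hL, hL0]
  rw [slope_def_field, h1, h0] at hs
  norm_num at hs
  have hgi : ⟪gradient f x, u - x⟫ = (fderiv ℝ f x) u - (fderiv ℝ f x) x := by norm_num
  linarith

theorem stmt_5 {n : ℕ} (X : Set (EuclideanSpace ℝ (Fin n)))
    (hXne : X.Nonempty) (hXclosed : IsClosed X) (hXconv : Convex ℝ X)
    (f φ : EuclideanSpace ℝ (Fin n) → ℝ)
    (hf : ConvexOn ℝ Set.univ f) (hdiff : Differentiable ℝ f)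
    (hφ : ConvexOn ℝ Set.univ φ)
    (η σ M : ℝ) (hη : 0 < η) (hσ : 0 ≤ σ) (hM : 0 < M) (hηM : η ≥ 2 * M)
    (x xb xpp : EuclideanSpace ℝ (Fin n))
    (hxpp : xpp ∈ X ∧ ∀ u ∈ X,
      ⟪gradient f x, xpp⟫ + φ xpp + σ / 2 * ‖xpp - xb‖ ^ 2 + η / 2 * ‖xpp - x‖ ^ 2 ≤
      ⟪gradient f x, u⟫ + φ u + σ / 2 * ‖u - xb‖ ^ 2 + η / 2 * ‖u - x‖ ^ 2)
    (hdesc : f xpp - f x - ⟪gradient f x, xpp - x⟫ ≤ M / 2 * ‖xpp - x‖ ^ 2) :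
    ∀ u ∈ X,
      (f xpp + φ xpp + σ / 2 * ‖xpp - xb‖ ^ 2) - (f u + φ u + σ / 2 * ‖u - xb‖ ^ 2) ≤
      η / 2 * ‖u - x‖ ^ 2 - (σ + η) / 2 * ‖u - xpp‖ ^ 2 - (η - M) / 2 * ‖xpp - x‖ ^ 2 := by
  intro u hu
  set g := gradient f x with hg
  set Fu : ℝ := ⟪g, u⟫ + φ u + σ / 2 * ‖u - xb‖ ^ 2 + η / 2 * ‖u - x‖ ^ 2 with hFu
  set Fp : ℝ := ⟪g, xpp⟫ + φ xpp + σ / 2 * ‖xpp - xb‖ ^ 2 + η / 2 * ‖xpp - x‖ ^ 2 with hFp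
  have key : ∀ t ∈ Ioo (0:ℝ) 1, (σ + η) / 2 * ((1 - t) * ‖u - xpp‖ ^ 2) ≤ Fu - Fp := by
    intro t ht
    have hwX : (1 - t) • xpp + t • u ∈ X :=
      hXconv hxpp.1 hu (by linarith [ht.2]) ht.1.le (by ring)
    have hmin := hxpp.2 _ hwX
    have hφw : φ ((1 - t) • xpp + t • u) ≤ (1 - t) * φ xpp + t * φ u :=
      hφ.2 (mem_univ xpp) (mem_univ u) (by linarith [ht.2]) ht.1.le (by ring)
    have hinner : ⟪g, (1 - t) • xpp + t • u⟫ = (1 - t) * ⟪g, xpp⟫ + t * ⟪g, u⟫ := by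
      rw [inner_add_right, real_inner_smul_right, real_inner_smul_right]
    rw [combo_norm_sq' xpp u xb t, combo_norm_sq' xpp u x t, hinner,
      norm_sub_rev xpp u] at hmin
    have ht0 := ht.1
    refine le_of_mul_le_mul_left ?_ ht0
    nlinarith [hmin, hφw]
  have strong : (σ + η) / 2 * ‖u - xpp‖ ^ 2 ≤ Fu - Fp := by
    have hc : Continuous fun t : ℝ => (σ + η) / 2 * ((1 - t) * ‖u - xpp‖ ^ 2) :=
      continuous_const.mul ((continuous_const.sub continuous_id).mul continuous_const)
    have htend : Filter.Tendsto (fun t : ℝ => (σ + η) / 2 * ((1 - t) * ‖u - xpp‖ ^ 2))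
        (nhdsWithin 0 (Ioi 0)) (nhds ((σ + η) / 2 * ‖u - xpp‖ ^ 2)) := by
      have h2 := (hc.tendsto 0).mono_left
        (nhdsWithin_le_nhds : nhdsWithin (0:ℝ) (Ioi 0) ≤ nhds 0)
      simpa using h2
    refine le_of_tendsto htend ?_
    filter_upwards [Ioo_mem_nhdsGT_of_mem (by norm_num : (0:ℝ) ∈ Ico (0:ℝ) 1)] with t ht
    exact key t ht
  have hgrad : f x + ⟪g, u - x⟫ ≤ f u := grad_ineq f hf hdiff x u
  have e1 : ⟪g, u - x⟫ = ⟪g, u⟫ - ⟪g, x⟫ := inner_sub_right g u x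
  have e2 : ⟪g, xpp - x⟫ = ⟪g, xpp⟫ - ⟪g, x⟫ := inner_sub_right g xpp x
  rw [e1] at hgrad
  rw [e2] at hdesc
  rw [hFu, hFp] at strong
  linarith
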